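/- Let K be a field and m a natural number. Let Q_red be an m×m matrix over K, T an invertible m×m matrix over K, and λ : Fin m → K a function with T⁻¹ * Q_red * T = diagonal(λ) and λ k ≠ 0 for every k. Let Y and F be 2×2 matrices over K with F invertible. Then det(I_{2m} + (I_m ⊗ Y) * (Q_red ⊗ F)⁻¹) = ∏_{k} det(I₂ + (λ k)⁻¹ • (Y * F⁻¹)); that is, the closed-loop characteristic determinant of the m-converter system factors as the product of the closed-loop characteristic determinants of the m modal subsystems, the k-th of which has open-loop transfer matrix Y * (λ k • F)⁻¹. -/

import Mathlib

open Matrix Kronecker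

section Aux

variable {K : Type*} [Field K] {m : ℕ}

lemma kron_one_inv (A : Matrix (Fin m) (Fin m) K) (hA : IsUnit A.det) :
    (A ⊗ₖ (1 : Matrix (Fin 2) (Fin 2) K))⁻¹ = A⁻¹ ⊗ₖ 1 := by
  apply inv_eq_right_inv
  rw [← Matrix.mul_kronecker_mul, Matrix.mul_nonsing_inv _ hA, Matrix.one_mul,
    Matrix.one_kronecker_one]

lemma diag_kron_inv (lam : Fin m → K) (hlam : ∀ k, lam k ≠ 0)
    (F : Matrix (Fin 2) (Fin 2) K) (hF : IsUnit F.det) :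
    ((Matrix.diagonal lam) ⊗ₖ F)⁻¹ = (Matrix.diagonal fun k => (lam k)⁻¹) ⊗ₖ F⁻¹ := by
  apply inv_eq_right_inv
  rw [← Matrix.mul_kronecker_mul, Matrix.diagonal_mul_diagonal,
    Matrix.mul_nonsing_inv _ hF]
  have : (fun k => lam k * (lam k)⁻¹) = fun _ => (1 : K) := by
    funext k; exact mul_inv_cancel₀ (hlam k)
  rw [this, Matrix.diagonal_one, Matrix.one_kronecker_one]

lemma det_one_add_diag_kron (μ : Fin m → K) (M : Matrix (Fin 2) (Fin 2) K) :
    ((1 : Matrix (Fin m × Fin 2) (Fin m × Fin 2) K) +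
        (Matrix.diagonal μ) ⊗ₖ M).det =
      ∏ k : Fin m, ((1 : Matrix (Fin 2) (Fin 2) K) + μ k • M).det := by
  have h : (1 : Matrix (Fin m × Fin 2) (Fin m × Fin 2) K) + (Matrix.diagonal μ) ⊗ₖ M =
      (Matrix.blockDiagonal fun k => (1 : Matrix (Fin 2) (Fin 2) K) + μ k • M).submatrix
        (Equiv.prodComm (Fin m) (Fin 2)) (Equiv.prodComm (Fin m) (Fin 2)) := by
    ext ⟨k, i⟩ ⟨k', j⟩
    simp only [Matrix.add_apply, Matrix.one_apply, Matrix.kroneckerMap_apply,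
      Matrix.diagonal_apply, Matrix.submatrix_apply, Equiv.prodComm_apply, Prod.swap,
      Matrix.blockDiagonal_apply, Matrix.smul_apply, smul_eq_mul, Prod.mk.injEq]
    by_cases hk : k = k' <;> by_cases hij : i = j <;> simp [hk, hij]
  rw [h, Matrix.det_submatrix_equiv_self, Matrix.det_blockDiagonal]

end Aux

/-- The closed-loop characteristic determinant of the `m`-converter system factors as the
product of the closed-loop characteristic determinants of the `m` modal subsystems, the
`k`-th of which has open-loop transfer matrix `Y * (λ k • F)⁻¹ = (λ k)⁻¹ • (Y * F⁻¹)`. -/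
theorem char_det_factorization {K : Type*} [Field K] {m : ℕ}
    (Qred T : Matrix (Fin m) (Fin m) K) (hT : IsUnit T.det)
    (lam : Fin m → K) (hdiag : T⁻¹ * Qred * T = Matrix.diagonal lam)
    (hlam : ∀ k, lam k ≠ 0)
    (Y F : Matrix (Fin 2) (Fin 2) K) (hF : IsUnit F.det) :
    ((1 : Matrix (Fin m × Fin 2) (Fin m × Fin 2) K) +
        ((1 : Matrix (Fin m) (Fin m) K) ⊗ₖ Y) * (Qred ⊗ₖ F)⁻¹).det =
      ∏ k : Fin m, ((1 : Matrix (Fin 2) (Fin 2) K) + (lam k)⁻¹ • (Y * F⁻¹)).det := by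
  set D : Matrix (Fin m) (Fin m) K := Matrix.diagonal lam with hD
  have hTinv : IsUnit T⁻¹.det := by
    rw [Matrix.det_nonsing_inv]
    exact hT.ringInverse
  have hQ : Qred = T * D * T⁻¹ := by
    have h := congrArg (fun X => T * X * T⁻¹) hdiag
    simp only [← Matrix.mul_assoc] at h
    rwa [Matrix.mul_nonsing_inv _ hT, Matrix.one_mul, Matrix.mul_assoc,
      Matrix.mul_nonsing_inv _ hT, Matrix.mul_one] at h
  have hQk : Qred ⊗ₖ F = (T ⊗ₖ 1) * (D ⊗ₖ F) * (T⁻¹ ⊗ₖ 1) := by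
    rw [← Matrix.mul_kronecker_mul, ← Matrix.mul_kronecker_mul, Matrix.one_mul,
      Matrix.mul_one, ← hQ]
  have hQinv : (Qred ⊗ₖ F)⁻¹ = (T ⊗ₖ 1) * (D ⊗ₖ F)⁻¹ * (T⁻¹ ⊗ₖ 1) := by
    rw [hQk, Matrix.mul_inv_rev, Matrix.mul_inv_rev,
      kron_one_inv T⁻¹ hTinv, kron_one_inv T hT,
      Matrix.nonsing_inv_nonsing_inv _ hT, Matrix.mul_assoc]
  have hcomm : ((1 : Matrix (Fin m) (Fin m) K) ⊗ₖ Y) * (T ⊗ₖ 1) =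
      (T ⊗ₖ 1) * ((1 : Matrix (Fin m) (Fin m) K) ⊗ₖ Y) := by
    rw [← Matrix.mul_kronecker_mul, ← Matrix.mul_kronecker_mul, Matrix.one_mul,
      Matrix.mul_one, Matrix.one_mul, Matrix.mul_one]
  have hUunit : IsUnit (T ⊗ₖ (1 : Matrix (Fin 2) (Fin 2) K)) := by
    rw [Matrix.isUnit_iff_isUnit_det, Matrix.det_kronecker]
    simpa using hT.pow 2
  have hconj : (1 : Matrix (Fin m × Fin 2) (Fin m × Fin 2) K) +
      ((1 : Matrix (Fin m) (Fin m) K) ⊗ₖ Y) * (Qred ⊗ₖ F)⁻¹ =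
      (T ⊗ₖ 1) * ((1 : Matrix (Fin m × Fin 2) (Fin m × Fin 2) K) +
        ((1 : Matrix (Fin m) (Fin m) K) ⊗ₖ Y) * (D ⊗ₖ F)⁻¹) * (T ⊗ₖ 1)⁻¹ := by
    rw [Matrix.mul_add, Matrix.add_mul, Matrix.mul_one, kron_one_inv T hT,
      ← Matrix.mul_kronecker_mul, Matrix.mul_nonsing_inv _ hT, Matrix.one_mul,
      Matrix.one_kronecker_one, hQinv]
    congr 1
    simp only [← Matrix.mul_assoc]
    rw [hcomm]
  rw [hconj, Matrix.det_conj hUunit,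
    diag_kron_inv lam hlam F hF, ← Matrix.mul_kronecker_mul, Matrix.one_mul,
    det_one_add_diag_kron]
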